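/- Let c := ∑_{p prime} (log p)/(p(p−1)). Then, as n ranges over the positive integers, ∑_{p prime} (⌊n/p²⌋ + ⌊n/p³⌋ + ⌊n/p⁴⌋ + ⋯)·log p = c·n + O(√n); that is, there is a constant M > 0 such that for all positive integers n, |∑_{p prime} ∑_{i ≥ 2} ⌊n/pⁱ⌋·log p − c·n| ≤ M·√n. -/

import Mathlib

open Finset Real


lemma theta_le (m : ℕ) :
    ∑ p ∈ (Finset.range (m+1)).filter Nat.Prime, Real.log p ≤ 2 * m := by
  have h1 : ∑ p ∈ (Finset.range (m+1)).filter Nat.Prime, Real.log p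
      = Real.log (primorial m) := by
    rw [primorial, Nat.cast_prod, Real.log_prod]
    intro p hp
    have := (Finset.mem_filter.1 hp).2.pos
    positivity
  rw [h1]
  have h2 : (primorial m : ℝ) ≤ (4:ℝ) ^ m := by
    exact_mod_cast Nat.cast_le.mpr (primorial_le_4_pow m)
  calc Real.log (primorial m) ≤ Real.log ((4:ℝ)^m) :=
        Real.log_le_log (by exact_mod_cast (primorial_pos m)) h2
    _ = m * Real.log 4 := by rw [Real.log_pow]
    _ ≤ m * 2 := by
        have h4 : Real.log 4 ≤ 2 := by
          rw [show (4:ℝ) = 2^2 by norm_num, Real.log_pow]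
          have := Real.log_two_lt_d9
          push_cast
          nlinarith
        have : (0:ℝ) ≤ m := by positivity
        nlinarith [Real.log_nonneg (by norm_num : (1:ℝ) ≤ 4)]
    _ = 2 * m := by ring

lemma theta_le' {m : ℕ} {s : Finset ℕ} (h : ∀ p ∈ s, p.Prime ∧ p ≤ m) :
    ∑ p ∈ s, Real.log p ≤ 2 * m := by
  refine le_trans (Finset.sum_le_sum_of_subset_of_nonneg ?_ ?_) (theta_le m)
  · intro p hp
    rcases h p hp with ⟨h1, h2⟩
    simp [Finset.mem_filter, Finset.mem_range, Nat.lt_succ_iff, h1, h2]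
  · intro p hp _
    rcases Finset.mem_filter.1 hp with ⟨_, hp2⟩
    have : (1:ℝ) ≤ p := by exact_mod_cast hp2.one_lt.le
    exact Real.log_nonneg this

noncomputable def Ffun : ℕ → ℝ := fun p => if p.Prime then Real.log p / (p * (p-1)) else 0

lemma Ffun_nonneg (p : ℕ) : 0 ≤ Ffun p := by
  unfold Ffun
  split
  · rename_i hp
    have : (2:ℝ) ≤ p := by exact_mod_cast hp.two_le
    have hl : 0 ≤ Real.log p := Real.log_nonneg (by linarith)
    have : (0:ℝ) < p * (p-1) := by nlinarith
    positivity
  · exact le_rfl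

noncomputable def Gfun : ℕ → ℝ := fun m => if m.Prime then 2 * Real.log m / m^2 else 0

lemma Gfun_nonneg (m : ℕ) : 0 ≤ Gfun m := by
  unfold Gfun
  split
  · rename_i hp
    have : (2:ℝ) ≤ m := by exact_mod_cast hp.two_le
    have hl : 0 ≤ Real.log m := Real.log_nonneg (by linarith)
    positivity
  · exact le_rfl

lemma Ffun_le_Gfun (m : ℕ) : Ffun m ≤ Gfun m := by
  unfold Ffun Gfun
  split
  · rename_i hp
    have hm : (2:ℝ) ≤ m := by exact_mod_cast hp.two_le
    have hl : 0 ≤ Real.log m := Real.log_nonneg (by linarith)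
    rw [div_le_div_iff₀ (by nlinarith) (by nlinarith)]
    nlinarith [mul_nonneg hl (by nlinarith : (0:ℝ) ≤ (m:ℝ) * ((m:ℝ) - 2))]
  · exact le_rfl

noncomputable def Theta (R t : ℕ) : ℝ :=
  ∑ m ∈ Finset.Ioc R t, (if m.Prime then 2 * Real.log m else 0)

lemma Theta_nonneg (R t : ℕ) : 0 ≤ Theta R t := by
  apply Finset.sum_nonneg
  intro m _
  split
  · rename_i hp
    have : (2:ℝ) ≤ m := by exact_mod_cast hp.two_le
    have := Real.log_nonneg (by linarith : (1:ℝ) ≤ m)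
    linarith
  · exact le_rfl

lemma Theta_le (R t : ℕ) : Theta R t ≤ 4 * t := by
  have h : Theta R t = ∑ m ∈ (Finset.Ioc R t).filter Nat.Prime, 2 * Real.log m :=
    (Finset.sum_filter _ _).symm
  rw [h, ← Finset.mul_sum]
  have h2 := theta_le' (m := t) (s := (Finset.Ioc R t).filter Nat.Prime) ?_
  · linarith
  · intro p hp
    rcases Finset.mem_filter.1 hp with ⟨h1, h2⟩
    exact ⟨h2, (Finset.mem_Ioc.1 h1).2⟩

lemma sum_G_Ioc_le (R : ℕ) (hR : 1 ≤ R) (M : ℕ) (hM : R ≤ M) :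
    ∑ m ∈ Finset.Ioc R M, Gfun m ≤ 24/(R+1) - 24/(M+1) + Theta R M / M^2 := by
  induction M, hM using Nat.le_induction with
  | base => simp [Theta]
  | succ M hM ih =>
    have hsum : ∑ m ∈ Finset.Ioc R (M+1), Gfun m
        = ∑ m ∈ Finset.Ioc R M, Gfun m + Gfun (M+1) :=
      Finset.sum_Ioc_succ_top (by omega) _
    have hTsucc : Theta R (M+1)
        = Theta R M + (if Nat.Prime (M+1) then 2 * Real.log ((M+1:ℕ):ℝ) else 0) :=
      Finset.sum_Ioc_succ_top (by omega) _
    have hM1 : (1:ℝ) ≤ M := by exact_mod_cast le_trans hR hM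
    have hMpos : (0:ℝ) < M := by linarith
    set c := (if Nat.Prime (M+1) then 2 * Real.log ((M+1:ℕ):ℝ) else 0) with hc
    have hcnn : 0 ≤ c := by
      rw [hc]
      split
      · have : (1:ℝ) ≤ ((M+1:ℕ):ℝ) := by exact_mod_cast Nat.one_le_iff_ne_zero.2 (by omega)
        have := Real.log_nonneg this
        linarith
      · exact le_rfl
    have hG : Gfun (M+1) = c / ((M+1:ℕ):ℝ)^2 := by
      rw [hc]
      unfold Gfun
      split <;> simp
    have hTle := Theta_le R M
    have hTnn := Theta_nonneg R M
    have hx : ((M+1:ℕ):ℝ) = (M:ℝ)+1 := by push_cast; ring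
    have key : Theta R M / M^2 - Theta R M / ((M:ℝ)+1)^2 ≤ 24/((M:ℝ)+1) - 24/((M:ℝ)+2) := by
      have h1 : Theta R M / M^2 - Theta R M / ((M:ℝ)+1)^2
          = Theta R M * ((2*M+1) / (M^2 * ((M:ℝ)+1)^2)) := by
        field_simp
        ring
      rw [h1]
      have h2 : Theta R M * ((2*M+1) / ((M:ℝ)^2 * ((M:ℝ)+1)^2))
          ≤ 4*M * ((2*M+1) / ((M:ℝ)^2 * ((M:ℝ)+1)^2)) := by
        apply mul_le_mul_of_nonneg_right hTle
        positivity
      have h3 : (24:ℝ)/((M:ℝ)+1) - 24/((M:ℝ)+2) = 24 / (((M:ℝ)+1)*((M:ℝ)+2)) := by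
        field_simp
        ring
      rw [h3]
      refine le_trans h2 ?_
      rw [← mul_div_assoc, div_le_div_iff₀ (by positivity) (by positivity)]
      nlinarith [sq_nonneg ((M:ℝ)-1)]
    rw [hsum, hTsucc, hx] at *
    have hsplit : (Theta R M + c)/((M:ℝ)+1)^2 = Theta R M/((M:ℝ)+1)^2 + c/((M:ℝ)+1)^2 :=
      add_div _ _ _
    rw [hG, hx] at *
    push_cast
    rw [hsplit, show (M:ℝ)+1+1 = (M:ℝ)+2 from by ring]
    linarith

lemma sum_F_Ioc_le (R : ℕ) (hR : 1 ≤ R) (M : ℕ) :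
    ∑ m ∈ Finset.Ioc R M, Ffun m ≤ 24/(R+1) := by
  rcases le_or_gt M R with h | h
  · rw [Finset.Ioc_eq_empty (by omega), Finset.sum_empty]
    positivity
  · have h1 : ∑ m ∈ Finset.Ioc R M, Ffun m ≤ ∑ m ∈ Finset.Ioc R M, Gfun m :=
      Finset.sum_le_sum fun m _ => Ffun_le_Gfun m
    have h2 := sum_G_Ioc_le R hR M h.le
    have hM1 : (1:ℝ) ≤ M := by exact_mod_cast le_trans hR h.le
    have h3 : Theta R M / (M:ℝ)^2 ≤ 4 / M := by
      rw [div_le_div_iff₀ (by positivity) (by positivity)]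
      have := Theta_le R M
      nlinarith
    have h4 : (4:ℝ)/M ≤ 24/((M:ℝ)+1) := by
      rw [div_le_div_iff₀ (by positivity) (by positivity)]
      nlinarith
    linarith

lemma sum_Ioc_shift (R N : ℕ) (f : ℕ → ℝ) :
    ∑ k ∈ Finset.range N, f (k + (R+1)) = ∑ m ∈ Finset.Ioc R (R+N), f m := by
  rw [← Finset.Ico_add_one_add_one_eq_Ioc, Finset.sum_Ico_eq_sum_range]
  have : R + N + 1 - (R + 1) = N := by omega
  rw [this]
  apply Finset.sum_congr rfl
  intro k _
  congr 1
  omega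

lemma sum_range_F_le (N : ℕ) : ∑ m ∈ Finset.range N, Ffun m ≤ 24 := by
  have h0 : ∑ m ∈ Finset.range N, Ffun m
      = ∑ m ∈ (Finset.range N).filter (fun m => 2 ≤ m), Ffun m := by
    rw [Finset.sum_filter_of_ne]
    intro m _ hm
    by_contra hc
    push_neg at hc
    interval_cases m <;> simp [Ffun] at hm
  rw [h0]
  have h1 : ∑ m ∈ (Finset.range N).filter (fun m => 2 ≤ m), Ffun m
      ≤ ∑ m ∈ Finset.Ioc 1 N, Ffun m := by
    apply Finset.sum_le_sum_of_subset_of_nonneg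
    · intro m hm
      rcases Finset.mem_filter.1 hm with ⟨h1, h2⟩
      simp only [Finset.mem_Ioc]
      exact ⟨by omega, by have := Finset.mem_range.1 h1; omega⟩
    · intro m _ _
      exact Ffun_nonneg m
  have h2 := sum_F_Ioc_le 1 le_rfl N
  have : (24:ℝ)/(1+1) ≤ 24 := by norm_num
  push_cast at h2
  linarith

lemma summable_Ffun : Summable Ffun :=
  summable_of_sum_range_le Ffun_nonneg sum_range_F_le

lemma tail_F_le (R : ℕ) (hR : 1 ≤ R) : ∑' k : ℕ, Ffun (k + (R+1)) ≤ 24/(R+1) := by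
  apply Real.tsum_le_of_sum_range_le (fun k => Ffun_nonneg _)
  intro N
  rw [sum_Ioc_shift]
  exact sum_F_Ioc_le R hR (R+N)

lemma tail_F_nonneg (R : ℕ) : 0 ≤ ∑' k : ℕ, Ffun (k + (R+1)) :=
  tsum_nonneg (fun k => Ffun_nonneg _)


lemma per_prime (n p : ℕ) (hn : 1 ≤ n) (hp : p.Prime) :
    |(∑ i ∈ Finset.Icc 2 n, ((n / p^i : ℕ):ℝ) * Real.log p) - Ffun p * n|
      ≤ ((((Finset.Icc 2 n).filter (fun i => p^i ≤ n)).card : ℝ) + 4) * Real.log p := by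
  have hp2 : (2:ℝ) ≤ p := by exact_mod_cast hp.two_le
  have hppos : (0:ℝ) < p := by linarith
  set x : ℝ := (p:ℝ)⁻¹ with hxdef
  have hx0 : 0 < x := by positivity
  have hx12 : x ≤ 1/2 := by
    rw [hxdef, inv_le_comm₀ hppos (by norm_num)]
    linarith
  have hx1 : x < 1 := by linarith
  have h1x : (0:ℝ) < 1 - x := by linarith
  have h1xinv : (1-x)⁻¹ ≤ 2 := by
    rw [inv_le_comm₀ h1x (by norm_num)]
    linarith
  have h1xinv0 : (0:ℝ) ≤ (1-x)⁻¹ := by positivity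
  have hlog : 0 ≤ Real.log p := Real.log_nonneg (by linarith)
  have hxpow : ∀ i : ℕ, x ^ i = ((p:ℝ)^i)⁻¹ := fun i => by rw [hxdef, inv_pow]
  have hgeom : ∑' j : ℕ, x^j = (1-x)⁻¹ := tsum_geometric_of_lt_one hx0.le hx1
  have hsumgeom : Summable (fun j : ℕ => x^j) := summable_geometric_of_lt_one hx0.le hx1
  have hsumrange : ∀ m : ℕ, ∑ j ∈ Finset.range m, x^j ≤ (1-x)⁻¹ := by
    intro m
    rw [← hgeom]
    exact Summable.sum_le_tsum _ (fun j _ => by positivity) hsumgeom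
  have hpne : (p:ℝ) ≠ 0 := by linarith
  have hpne1 : (p:ℝ) - 1 ≠ 0 := by nlinarith
  have h1xne : 1 - x ≠ 0 := ne_of_gt h1x
  -- geometric series value of F
  have hFf : Ffun p * n = (n:ℝ) * Real.log p * (x^2 * (1-x)⁻¹) := by
    rw [Ffun, if_pos hp, hxdef]
    field_simp
  -- summability of the series
  have hsummable : Summable (fun j : ℕ => (n:ℝ) * Real.log p * x^(j+2)) := by
    apply Summable.congr ((hsumgeom.mul_left ((n:ℝ) * Real.log p * x^2)))
    intro j
    ring
  have htsum : ∑' j : ℕ, (n:ℝ) * Real.log p * x^(j+2) = Ffun p * n := by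
    have h1 : ∀ j : ℕ, (n:ℝ) * Real.log p * x^(j+2) = ((n:ℝ) * Real.log p * x^2) * x^j := by
      intro j; ring
    rw [tsum_congr h1, tsum_mul_left, hgeom, hFf]
    ring
  -- split at n-1
  have hsplit := Summable.sum_add_tsum_nat_add (f := fun j : ℕ => (n:ℝ) * Real.log p * x^(j+2))
    (n-1) hsummable
  rw [htsum] at hsplit
  -- reindex
  have hreindex : ∑ j ∈ Finset.range (n-1), (n:ℝ) * Real.log p * x^(j+2)
      = ∑ i ∈ Finset.Icc 2 n, (n:ℝ) * Real.log p * x^i := by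
    rw [← Finset.Ico_add_one_right_eq_Icc, Finset.sum_Ico_eq_sum_range]
    have h2 : n + 1 - 2 = n - 1 := by omega
    rw [h2]
    apply Finset.sum_congr rfl
    intro j _
    rw [add_comm j 2]
  set T : ℝ := ∑' j : ℕ, (n:ℝ) * Real.log p * x^((j+(n-1))+2) with hTdef
  have hT0 : 0 ≤ T := tsum_nonneg (fun j => by positivity)
  have hnxn : (n:ℝ) * x^n ≤ 1 := by
    have h1 : (n:ℕ) ≤ p^n := le_trans Nat.lt_two_pow_self.le (Nat.pow_le_pow_left hp.two_le n)
    have h2 : (n:ℝ) ≤ (p:ℝ)^n := by exact_mod_cast h1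
    rw [hxpow]
    rw [mul_inv_le_iff₀ (by positivity)]
    linarith
  have hTle : T ≤ 2 * Real.log p := by
    have h1 : ∀ j : ℕ, (n:ℝ) * Real.log p * x^((j+(n-1))+2)
        = ((n:ℝ) * Real.log p * x^(n+1)) * x^j := by
      intro j
      rw [show (j+(n-1))+2 = (n+1) + j by omega, pow_add]
      ring
    rw [hTdef, tsum_congr h1, tsum_mul_left, hgeom]
    have h2 : (n:ℝ) * x^(n+1) * (1-x)⁻¹ ≤ 2 := by
      have h3 : (n:ℝ) * x^(n+1) ≤ 1 := by
        rw [pow_succ]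
        calc (n:ℝ) * (x^n * x) = ((n:ℝ) * x^n) * x := by ring
          _ ≤ 1 * 1 := by
              apply mul_le_mul hnxn hx1.le hx0.le (by norm_num)
          _ = 1 := by norm_num
      calc (n:ℝ) * x^(n+1) * (1-x)⁻¹ ≤ 1 * 2 := by
            apply mul_le_mul h3 h1xinv h1xinv0 (by norm_num)
        _ = 2 := by norm_num
    calc (n:ℝ) * Real.log p * x^(n+1) * (1-x)⁻¹
        = Real.log p * ((n:ℝ) * x^(n+1) * (1-x)⁻¹) := by ring
      _ ≤ Real.log p * 2 := by
          apply mul_le_mul_of_nonneg_left h2 hlog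
      _ = 2 * Real.log p := by ring
  -- decompose
  have hkey : Ffun p * n = (∑ i ∈ Finset.Icc 2 n, (n:ℝ) * Real.log p * x^i) + T := by
    rw [← hsplit, hreindex]
  rw [hkey]
  set L : ℕ := Nat.log p n with hLdef
  -- per-term difference
  have hdiff : ∀ i ∈ Finset.Icc 2 n,
      p^i ≤ n → |((n / p^i : ℕ):ℝ) - (n:ℝ) * x^i| ≤ 1 := by
    intro i _ _
    have hpipos : (0:ℝ) < (p:ℝ)^i := by positivity
    have hxval : (n:ℝ) * x^i = (n:ℝ) / (p:ℝ)^i := by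
      rw [hxpow, div_eq_mul_inv]
    have hub : ((n / p^i : ℕ):ℝ) ≤ (n:ℝ) * x^i := by
      rw [hxval]
      calc ((n / p^i : ℕ):ℝ) ≤ (n:ℝ) / ((p^i : ℕ):ℝ) := Nat.cast_div_le
        _ = (n:ℝ) / (p:ℝ)^i := by push_cast; ring_nf
    have hlb : (n:ℝ) * x^i - 1 ≤ ((n / p^i : ℕ):ℝ) := by
      have h1 := Nat.div_add_mod n (p^i)
      have h2 := Nat.mod_lt n (show 0 < p^i from Nat.pow_pos (n := i) hp.pos)
      have h3 : (n:ℝ) < (p:ℝ)^i * ((n / p^i : ℕ):ℝ) + (p:ℝ)^i := by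
        have h4 : (n:ℝ) = (p:ℝ)^i * ((n / p^i : ℕ):ℝ) + ((n % p^i : ℕ):ℝ) := by
          exact_mod_cast congrArg (Nat.cast (R := ℝ)) h1.symm
        have h5 : ((n % p^i : ℕ):ℝ) < (p:ℝ)^i := by exact_mod_cast h2
        linarith
      rw [hxval, sub_le_iff_le_add, div_le_iff₀ hpipos]
      nlinarith [h3]
    have : -(1:ℝ) ≤ ((n / p^i : ℕ):ℝ) - (n:ℝ) * x^i := by linarith
    rw [abs_le]
    constructor
    · linarith
    · linarith
  -- the triangle inequality decomposition
  have hsub : ∑ i ∈ Finset.Icc 2 n, (((n / p^i:ℕ):ℝ) - (n:ℝ)*x^i) * Real.log p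
      = (∑ i ∈ Finset.Icc 2 n, ((n / p^i:ℕ):ℝ) * Real.log p)
        - ∑ i ∈ Finset.Icc 2 n, (n:ℝ)*Real.log p*x^i := by
    rw [← Finset.sum_sub_distrib]
    apply Finset.sum_congr rfl
    intro i _
    ring
  have heq : (∑ i ∈ Finset.Icc 2 n, ((n / p^i:ℕ):ℝ) * Real.log p)
      - ((∑ i ∈ Finset.Icc 2 n, (n:ℝ)*Real.log p*x^i) + T)
      = (∑ i ∈ Finset.Icc 2 n, (((n / p^i:ℕ):ℝ) - (n:ℝ)*x^i) * Real.log p) - T := by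
    rw [hsub]
    ring
  rw [heq]
  have habs1 : |(∑ i ∈ Finset.Icc 2 n, (((n / p^i:ℕ):ℝ) - (n:ℝ)*x^i) * Real.log p) - T|
      ≤ (∑ i ∈ Finset.Icc 2 n, |((n / p^i:ℕ):ℝ) - (n:ℝ)*x^i| * Real.log p) + T := by
    calc |(∑ i ∈ Finset.Icc 2 n, (((n / p^i:ℕ):ℝ) - (n:ℝ)*x^i) * Real.log p) - T|
        ≤ |∑ i ∈ Finset.Icc 2 n, (((n / p^i:ℕ):ℝ) - (n:ℝ)*x^i) * Real.log p| + |T| :=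
          abs_sub _ _
      _ ≤ (∑ i ∈ Finset.Icc 2 n, |(((n / p^i:ℕ):ℝ) - (n:ℝ)*x^i) * Real.log p|) + |T| := by
          gcongr
          exact Finset.abs_sum_le_sum_abs _ _
      _ = (∑ i ∈ Finset.Icc 2 n, |((n / p^i:ℕ):ℝ) - (n:ℝ)*x^i| * Real.log p) + T := by
          rw [abs_of_nonneg hT0]
          congr 1
          apply Finset.sum_congr rfl
          intro i _
          rw [abs_mul, abs_of_nonneg hlog]
  refine le_trans habs1 ?_
  -- split good and bad
  rw [← Finset.sum_filter_add_sum_filter_not (Finset.Icc 2 n) (fun i => p^i ≤ n)]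
  have hgood : ∑ i ∈ (Finset.Icc 2 n).filter (fun i => p^i ≤ n),
      |((n / p^i:ℕ):ℝ) - (n:ℝ)*x^i| * Real.log p
      ≤ (((Finset.Icc 2 n).filter (fun i => p^i ≤ n)).card : ℝ) * Real.log p := by
    calc ∑ i ∈ (Finset.Icc 2 n).filter (fun i => p^i ≤ n),
          |((n / p^i:ℕ):ℝ) - (n:ℝ)*x^i| * Real.log p
        ≤ ∑ i ∈ (Finset.Icc 2 n).filter (fun i => p^i ≤ n), 1 * Real.log p := by
          apply Finset.sum_le_sum
          intro i hi
          rcases Finset.mem_filter.1 hi with ⟨h1, h2⟩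
          exact mul_le_mul_of_nonneg_right (hdiff i h1 h2) hlog
      _ = (((Finset.Icc 2 n).filter (fun i => p^i ≤ n)).card : ℝ) * Real.log p := by
          rw [Finset.sum_const, one_mul, nsmul_eq_mul]
  have hbadsub : (Finset.Icc 2 n).filter (fun i => ¬ p^i ≤ n) ⊆ Finset.Icc (L+1) n := by
    intro i hi
    rcases Finset.mem_filter.1 hi with ⟨h1, h2⟩
    rcases Finset.mem_Icc.1 h1 with ⟨h3, h4⟩
    rw [Finset.mem_Icc]
    refine ⟨?_, h4⟩
    by_contra hc
    push_neg at hc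
    have h5 : p^i ≤ p^L := Nat.pow_le_pow_right hp.pos (by omega)
    have h6 : p^L ≤ n := Nat.pow_log_le_self p (show n ≠ 0 by omega)
    omega
  have hgeomIcc : ∑ i ∈ Finset.Icc (L+1) n, (n:ℝ) * x^i ≤ 2 := by
    have h1 : ∑ i ∈ Finset.Icc (L+1) n, (n:ℝ) * x^i
        = (n:ℝ) * x^(L+1) * ∑ j ∈ Finset.range (n - L), x^j := by
      rw [← Finset.Ico_add_one_right_eq_Icc, Finset.sum_Ico_eq_sum_range]
      have h2 : n + 1 - (L+1) = n - L := by omega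
      rw [h2, Finset.mul_sum]
      apply Finset.sum_congr rfl
      intro j _
      rw [pow_add]
      ring
    have hnxL : (n:ℝ) * x^(L+1) ≤ 1 := by
      have h3 : n < p^(L+1) := Nat.lt_pow_succ_log_self hp.one_lt n
      have h4 : (n:ℝ) ≤ (p:ℝ)^(L+1) := by
        have : (n:ℝ) < ((p^(L+1):ℕ):ℝ) := by exact_mod_cast h3
        push_cast at this
        linarith
      rw [hxpow, mul_inv_le_iff₀ (by positivity)]
      linarith
    rw [h1]
    calc (n:ℝ) * x^(L+1) * ∑ j ∈ Finset.range (n - L), x^j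
        ≤ 1 * (1-x)⁻¹ := by
          apply mul_le_mul hnxL (hsumrange _) (Finset.sum_nonneg fun j _ => by positivity)
            (by norm_num)
      _ ≤ 2 := by linarith
  have hbad : ∑ i ∈ (Finset.Icc 2 n).filter (fun i => ¬ p^i ≤ n),
      |((n / p^i:ℕ):ℝ) - (n:ℝ)*x^i| * Real.log p ≤ 2 * Real.log p := by
    have h1 : ∀ i ∈ (Finset.Icc 2 n).filter (fun i => ¬ p^i ≤ n),
        |((n / p^i:ℕ):ℝ) - (n:ℝ)*x^i| * Real.log p = (n:ℝ) * x^i * Real.log p := by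
      intro i hi
      rcases Finset.mem_filter.1 hi with ⟨h2, h3⟩
      push_neg at h3
      rw [Nat.div_eq_of_lt h3]
      rw [Nat.cast_zero, zero_sub, abs_neg, abs_of_nonneg (by positivity)]
    rw [Finset.sum_congr rfl h1, ← Finset.sum_mul]
    apply mul_le_mul_of_nonneg_right _ hlog
    calc ∑ i ∈ (Finset.Icc 2 n).filter (fun i => ¬ p^i ≤ n), (n:ℝ) * x^i
        ≤ ∑ i ∈ Finset.Icc (L+1) n, (n:ℝ) * x^i := by
          apply Finset.sum_le_sum_of_subset_of_nonneg hbadsub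
          intro i _ _
          positivity
      _ ≤ 2 := hgeomIcc
  have hfinal : (((Finset.Icc 2 n).filter (fun i => p^i ≤ n)).card : ℝ) * Real.log p
      + 2 * Real.log p + T
      ≤ ((((Finset.Icc 2 n).filter (fun i => p^i ≤ n)).card : ℝ) + 4) * Real.log p := by
    have hc0 : (0:ℝ) ≤ (((Finset.Icc 2 n).filter (fun i => p^i ≤ n)).card : ℝ) :=
      Nat.cast_nonneg _
    ring_nf
    linarith [hTle]
  linarith

/-- The constant `c := ∑_{p prime} (log p) / (p (p - 1))` (a convergent series). -/
noncomputable def cconst : ℝ :=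
  ∑' p : {p : ℕ // p.Prime}, Real.log (p : ℕ) / (((p : ℕ) : ℝ) * (((p : ℕ) : ℝ) - 1))

lemma cconst_eq : cconst = ∑' m : ℕ, Ffun m := by
  have h2 : cconst = ∑' x : ↑{p : ℕ | Nat.Prime p},
      Real.log (x:ℕ) / (((x:ℕ):ℝ) * (((x:ℕ):ℝ) - 1)) := rfl
  rw [h2, tsum_subtype {p : ℕ | Nat.Prime p}
    (fun p => Real.log p / ((p:ℝ) * ((p:ℝ) - 1)))]
  congr 1
  ext m
  simp only [Set.indicator_apply, Set.mem_setOf_eq, Ffun]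

lemma cconst_split (R : ℕ) :
    cconst = ∑ m ∈ Finset.range (R+1), Ffun m + ∑' k : ℕ, Ffun (k + (R+1)) := by
  rw [cconst_eq]
  exact (Summable.sum_add_tsum_nat_add (R+1) summable_Ffun).symm

set_option maxHeartbeats 2000000 in
/-- **Proposition (on the contribution of higher prime powers).** With
`c := ∑_{p prime} (log p)/(p(p-1))`, we have
`∑_{p prime} (⌊n/p²⌋ + ⌊n/p³⌋ + ⋯) log p = c n + O(√n)`: there is `M > 0` such that for
every positive integer `n`,
`|∑_{p prime} ∑_{i ≥ 2} ⌊n/pⁱ⌋ log p − c n| ≤ M √n`. (The double sum has only finitely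
many nonzero terms; `n / p ^ i` is natural division, i.e. `⌊n/pⁱ⌋`.) -/
theorem sum_higher_powers_eq :
    ∃ M : ℝ, 0 < M ∧ ∀ n : ℕ, 0 < n →
      |(∑ᶠ p ∈ {p : ℕ | p.Prime}, ∑ᶠ i ∈ {i : ℕ | 2 ≤ i}, ((n / p ^ i : ℕ) : ℝ) * Real.log p)
          - cconst * n| ≤ M * Real.sqrt n := by
  refine ⟨1000, by norm_num, ?_⟩
  intro n hn
  set R : ℕ := Nat.sqrt n with hRdef
  have hR1 : 1 ≤ R := by
    rw [hRdef]
    exact Nat.sqrt_pos.2 hn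
  set Pfin : Finset ℕ := (Finset.range (R+1)).filter Nat.Prime with hPfin
  -- inner finsum conversion
  have inner_eq : ∀ p : ℕ, p.Prime →
      (∑ᶠ i ∈ {i : ℕ | 2 ≤ i}, ((n / p ^ i : ℕ) : ℝ) * Real.log p)
        = ∑ i ∈ Finset.Icc 2 n, ((n / p ^ i : ℕ) : ℝ) * Real.log p := by
    intro p hp
    apply finsum_mem_eq_sum_of_inter_support_eq
    ext i
    simp only [Set.mem_inter_iff, Set.mem_setOf_eq, Function.mem_support, Finset.coe_Icc,
      Set.mem_Icc]
    constructor
    · rintro ⟨h2, hne⟩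
      refine ⟨⟨h2, ?_⟩, hne⟩
      have hdiv : n / p^i ≠ 0 := by
        intro h0
        rw [h0] at hne
        simp at hne
      have hpi : p^i ≤ n := by
        by_contra hc
        push_neg at hc
        exact hdiv (Nat.div_eq_of_lt hc)
      have hlt : i < n :=
        calc i < 2^i := Nat.lt_two_pow_self
          _ ≤ p^i := Nat.pow_le_pow_left hp.two_le i
          _ ≤ n := hpi
      exact hlt.le
    · rintro ⟨⟨h2, _⟩, hne⟩
      exact ⟨h2, hne⟩
  -- outer finsum conversion
  have outer_eq : (∑ᶠ p ∈ {p : ℕ | p.Prime},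
        ∑ᶠ i ∈ {i : ℕ | 2 ≤ i}, ((n / p ^ i : ℕ) : ℝ) * Real.log p)
      = ∑ p ∈ Pfin, ∑ i ∈ Finset.Icc 2 n, ((n / p ^ i : ℕ) : ℝ) * Real.log p := by
    have h1 : (∑ᶠ p ∈ {p : ℕ | p.Prime},
          ∑ᶠ i ∈ {i : ℕ | 2 ≤ i}, ((n / p ^ i : ℕ) : ℝ) * Real.log p)
        = ∑ p ∈ Pfin, ∑ᶠ i ∈ {i : ℕ | 2 ≤ i}, ((n / p ^ i : ℕ) : ℝ) * Real.log p := by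
      apply finsum_mem_eq_sum_of_inter_support_eq
      ext p
      constructor
      · rintro ⟨hp, hne⟩
        replace hp : p.Prime := hp
        replace hne : (∑ᶠ i ∈ {i : ℕ | 2 ≤ i}, ((n / p ^ i : ℕ) : ℝ) * Real.log p) ≠ 0 := hne
        rw [inner_eq p hp] at hne
        obtain ⟨i, hi, hnei⟩ := Finset.exists_ne_zero_of_sum_ne_zero hne
        rcases Finset.mem_Icc.1 hi with ⟨h2i, _⟩
        have hdiv : n / p^i ≠ 0 := by
          intro h0
          rw [h0] at hnei
          simp at hnei
        have hpi : p^i ≤ n := by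
          by_contra hc
          push_neg at hc
          exact hdiv (Nat.div_eq_of_lt hc)
        have hpp : p * p ≤ n := by
          calc p * p = p^2 := (sq p).symm
            _ ≤ p^i := Nat.pow_le_pow_right hp.pos h2i
            _ ≤ n := hpi
        have hpR : p ≤ R := Nat.le_sqrt.2 hpp
        refine ⟨?_, ?_⟩
        swap
        · show (∑ᶠ i ∈ {i : ℕ | 2 ≤ i}, ((n / p ^ i : ℕ) : ℝ) * Real.log p) ≠ 0
          rw [inner_eq p hp]
          exact hne
        rw [Finset.mem_coe, hPfin, Finset.mem_filter, Finset.mem_range]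
        exact ⟨by omega, hp⟩
      · rintro ⟨hpm, hne⟩
        rw [Finset.mem_coe, hPfin, Finset.mem_filter] at hpm
        exact ⟨hpm.2, hne⟩
    rw [h1]
    apply Finset.sum_congr rfl
    intro p hp
    exact inner_eq p (Finset.mem_filter.1 hp).2
  -- cconst split
  have hsumF : ∑ m ∈ Finset.range (R+1), Ffun m = ∑ p ∈ Pfin, Ffun p := by
    rw [hPfin, Finset.sum_filter]
    apply Finset.sum_congr rfl
    intro m _
    rw [Ffun]
    split <;> simp_all
  set tail : ℝ := ∑' k : ℕ, Ffun (k + (R+1)) with htail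
  have hcsplit : cconst * n = (∑ p ∈ Pfin, Ffun p * n) + tail * n := by
    rw [cconst_split R, hsumF, ← Finset.sum_mul]
    ring
  rw [outer_eq, hcsplit]
  have hD : (∑ p ∈ Pfin, ∑ i ∈ Finset.Icc 2 n, ((n / p ^ i : ℕ) : ℝ) * Real.log p)
      - ((∑ p ∈ Pfin, Ffun p * n) + tail * n)
      = (∑ p ∈ Pfin, ((∑ i ∈ Finset.Icc 2 n, ((n / p ^ i : ℕ) : ℝ) * Real.log p)
          - Ffun p * n)) - tail * n := by
    rw [Finset.sum_sub_distrib]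
    ring
  rw [hD]
  -- numeric quantities
  set s : ℝ := Real.sqrt n with hs
  have hn1 : (1:ℝ) ≤ n := by exact_mod_cast hn
  have hnpos : (0:ℝ) < n := by linarith
  have hs1 : 1 ≤ s := by
    rw [hs]
    rw [show (1:ℝ) = Real.sqrt 1 from (Real.sqrt_one).symm]
    exact Real.sqrt_le_sqrt hn1
  have hspos : 0 < s := by linarith
  have hssq : s * s = n := Real.mul_self_sqrt (by positivity)
  have hRs : (R:ℝ) ≤ s := by
    rw [hs]
    rw [show (R:ℝ) = Real.sqrt ((R:ℝ)^2) from (Real.sqrt_sq (by positivity)).symm]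
    apply Real.sqrt_le_sqrt
    have h2 : R * R ≤ n := Nat.sqrt_le n
    have h3 : ((R*R:ℕ):ℝ) ≤ (n:ℝ) := by exact_mod_cast h2
    push_cast at h3
    nlinarith
  have hsR : s ≤ (R:ℝ) + 1 := by
    rw [hs]
    have h2 : n < (R+1) * (R+1) := Nat.lt_succ_sqrt n
    have h3 : (n:ℝ) ≤ ((R:ℝ)+1)^2 := by
      have : ((n:ℕ):ℝ) ≤ (((R+1)*(R+1):ℕ):ℝ) := by exact_mod_cast h2.le
      push_cast at this
      nlinarith
    calc Real.sqrt n ≤ Real.sqrt (((R:ℝ)+1)^2) := Real.sqrt_le_sqrt h3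
      _ = (R:ℝ)+1 := Real.sqrt_sq (by positivity)
  -- tail bound
  have htailb : tail * n ≤ 24 * s := by
    have h1 : tail ≤ 24/((R:ℝ)+1) := by exact_mod_cast tail_F_le R hR1
    have h2 : (24:ℝ)/((R:ℝ)+1) ≤ 24/s := by
      apply div_le_div_of_nonneg_left (by norm_num) hspos hsR
    have h3 : tail * n ≤ (24/s) * n := by
      apply mul_le_mul_of_nonneg_right (le_trans h1 h2) (by positivity)
    calc tail * n ≤ (24/s) * n := h3
      _ = 24 * s := by
          field_simp
          nlinarith [hssq]
  -- sum of per-prime bounds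
  have hperp : |(∑ p ∈ Pfin, ((∑ i ∈ Finset.Icc 2 n, ((n / p ^ i : ℕ) : ℝ) * Real.log p)
        - Ffun p * n)) - tail * n|
      ≤ (∑ p ∈ Pfin, ((((Finset.Icc 2 n).filter (fun i => p^i ≤ n)).card : ℝ) + 4)
          * Real.log p) + tail * n := by
    have htn : 0 ≤ tail * n := mul_nonneg (tail_F_nonneg R) (by positivity)
    calc |(∑ p ∈ Pfin, ((∑ i ∈ Finset.Icc 2 n, ((n / p ^ i : ℕ) : ℝ) * Real.log p)
          - Ffun p * n)) - tail * n|
        ≤ |∑ p ∈ Pfin, ((∑ i ∈ Finset.Icc 2 n, ((n / p ^ i : ℕ) : ℝ) * Real.log p)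
            - Ffun p * n)| + |tail * n| := abs_sub _ _
      _ ≤ (∑ p ∈ Pfin, |(∑ i ∈ Finset.Icc 2 n, ((n / p ^ i : ℕ) : ℝ) * Real.log p)
            - Ffun p * n|) + |tail * n| := by
          gcongr
          exact Finset.abs_sum_le_sum_abs _ _
      _ ≤ (∑ p ∈ Pfin, ((((Finset.Icc 2 n).filter (fun i => p^i ≤ n)).card : ℝ) + 4)
            * Real.log p) + tail * n := by
          rw [abs_of_nonneg htn]
          gcongr with p hp
          exact per_prime n p hn (Finset.mem_filter.1 hp).2
  refine le_trans hperp ?_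
  -- notation
  set L2 : ℕ := Nat.log 2 n with hL2def
  set X : ℕ := Nat.floor ((n:ℝ)^((1:ℝ)/3)) with hXdef
  set Pfin3 : Finset ℕ := Pfin.filter (fun p => p^3 ≤ n) with hPfin3
  set u : ℝ := (n:ℝ)^((1:ℝ)/3) with hu
  set v : ℝ := (n:ℝ)^((1:ℝ)/12) with hv
  have hu0 : 0 < u := by rw [hu]; positivity
  have hv0 : 0 < v := by rw [hv]; positivity
  have hu1 : 1 ≤ u := by
    calc (1:ℝ) = (1:ℝ)^((1:ℝ)/3) := (Real.one_rpow _).symm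
      _ ≤ (n:ℝ)^((1:ℝ)/3) := Real.rpow_le_rpow (by norm_num) hn1 (by norm_num)
      _ = u := by rw [hu]
  have hlogn0 : 0 ≤ Real.log n := Real.log_nonneg hn1
  have hlogp : ∀ p ∈ Pfin, 0 ≤ Real.log p ∧ Real.log p ≤ Real.log n := by
    intro p hp
    rcases Finset.mem_filter.1 hp with ⟨hp1, hp2⟩
    have h2 : (2:ℝ) ≤ p := by exact_mod_cast hp2.two_le
    have hpn : p ≤ n := by
      have := Finset.mem_range.1 hp1
      have := Nat.sqrt_le_self n
      omega
    constructor
    · exact Real.log_nonneg (by linarith)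
    · exact Real.log_le_log (by linarith) (by exact_mod_cast hpn)
  have hsplog : ∑ p ∈ Pfin, Real.log p ≤ 2*(R:ℝ) := theta_le R
  -- K_p ≤ 1 + K3_p
  have hK : ∀ p : ℕ, ((Finset.Icc 2 n).filter (fun i => p^i ≤ n)).card
      ≤ 1 + ((Finset.Icc 3 n).filter (fun i => p^i ≤ n)).card := by
    intro p
    have hsub : (Finset.Icc 2 n).filter (fun i => p^i ≤ n)
        ⊆ insert 2 ((Finset.Icc 3 n).filter (fun i => p^i ≤ n)) := by
      intro i hi
      rcases Finset.mem_filter.1 hi with ⟨h1, h2⟩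
      rcases Finset.mem_Icc.1 h1 with ⟨h3, h4⟩
      rcases Nat.eq_or_lt_of_le h3 with h5 | h5
      · exact Finset.mem_insert.2 (Or.inl h5.symm)
      · exact Finset.mem_insert.2 (Or.inr (Finset.mem_filter.2
          ⟨Finset.mem_Icc.2 ⟨by omega, h4⟩, h2⟩))
    calc ((Finset.Icc 2 n).filter (fun i => p^i ≤ n)).card
        ≤ (insert 2 ((Finset.Icc 3 n).filter (fun i => p^i ≤ n))).card :=
          Finset.card_le_card hsub
      _ ≤ 1 + ((Finset.Icc 3 n).filter (fun i => p^i ≤ n)).card := by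
          rw [add_comm]
          exact Finset.card_insert_le _ _
  -- K3 bound per prime
  have hK3 : ∀ p ∈ Pfin, (((Finset.Icc 3 n).filter (fun i => p^i ≤ n)).card : ℝ) * Real.log p
      ≤ (if p^3 ≤ n then (L2:ℝ) * Real.log n else 0) := by
    intro p hp
    have hprime := (Finset.mem_filter.1 hp).2
    rcases hlogp p hp with ⟨hl0, hln⟩
    by_cases h3 : p^3 ≤ n
    · rw [if_pos h3]
      have hcard : ((Finset.Icc 3 n).filter (fun i => p^i ≤ n)).card ≤ L2 := by
        have hsub : (Finset.Icc 3 n).filter (fun i => p^i ≤ n) ⊆ Finset.Icc 3 L2 := by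
          intro i hi
          rcases Finset.mem_filter.1 hi with ⟨h1, h2⟩
          rcases Finset.mem_Icc.1 h1 with ⟨h4, _⟩
          have h5 : 2^i ≤ n := le_trans (Nat.pow_le_pow_left hprime.two_le i) h2
          have h6 : i ≤ L2 := (Nat.le_log_iff_pow_le (by norm_num) (by omega)).2 h5
          exact Finset.mem_Icc.2 ⟨h4, h6⟩
        calc ((Finset.Icc 3 n).filter (fun i => p^i ≤ n)).card
            ≤ (Finset.Icc 3 L2).card := Finset.card_le_card hsub
          _ = L2 + 1 - 3 := Nat.card_Icc 3 L2
          _ ≤ L2 := by omega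
      have hcard' : (((Finset.Icc 3 n).filter (fun i => p^i ≤ n)).card : ℝ) ≤ (L2:ℝ) := by
        exact_mod_cast hcard
      apply mul_le_mul hcard' hln hl0 (Nat.cast_nonneg _)
    · rw [if_neg h3]
      have hempty : (Finset.Icc 3 n).filter (fun i => p^i ≤ n) = ∅ := by
        apply Finset.filter_eq_empty_iff.2
        intro i hi
        rcases Finset.mem_Icc.1 hi with ⟨h4, _⟩
        have h5 : p^3 ≤ p^i := Nat.pow_le_pow_right hprime.pos h4
        omega
      rw [hempty]
      simp
  -- card of Pfin3
  have hcard3 : (Pfin3.card : ℝ) ≤ 2 * u := by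
    have hsub : Pfin3 ⊆ Finset.range (X+1) := by
      intro p hp
      rcases Finset.mem_filter.1 hp with ⟨_, h2⟩
      have h3 : ((p:ℝ))^(3:ℕ) ≤ (n:ℝ) := by exact_mod_cast h2
      have h4 : (((p:ℝ))^(3:ℕ))^((1:ℝ)/3) ≤ (n:ℝ)^((1:ℝ)/3) :=
        Real.rpow_le_rpow (by positivity) h3 (by norm_num)
      have h5 : (((p:ℝ))^(3:ℕ))^((1:ℝ)/3) = (p:ℝ) := by
        rw [← Real.rpow_natCast (p:ℝ) 3, ← Real.rpow_mul (Nat.cast_nonneg p)]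
        norm_num
      rw [h5] at h4
      have h6 : p ≤ X := Nat.le_floor h4
      exact Finset.mem_range.2 (by omega)
    have h7 : Pfin3.card ≤ X + 1 := by
      calc Pfin3.card ≤ (Finset.range (X+1)).card := Finset.card_le_card hsub
        _ = X + 1 := Finset.card_range _
    have h8 : (X:ℝ) ≤ u := Nat.floor_le (by positivity)
    have h9 : (Pfin3.card : ℝ) ≤ (X:ℝ) + 1 := by exact_mod_cast h7
    linarith
  -- L2 bound
  have hL2b : (L2:ℝ) ≤ 2 * Real.log n := by
    have h1 : (2:ℕ)^L2 ≤ n := Nat.pow_log_le_self 2 (by omega)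
    have h2 : ((2:ℝ))^L2 ≤ (n:ℝ) := by exact_mod_cast h1
    have h3 : Real.log ((2:ℝ)^L2) ≤ Real.log n := Real.log_le_log (by positivity) h2
    rw [Real.log_pow] at h3
    have h4 := Real.log_two_gt_d9
    have h5 : (0:ℝ) ≤ (L2:ℝ) := Nat.cast_nonneg _
    have h6 : (L2:ℝ) * 0.6931471803 ≤ (L2:ℝ) * Real.log 2 :=
      mul_le_mul_of_nonneg_left h4.le h5
    linarith
  -- log n ≤ 12 v
  have hlogv : Real.log n ≤ 12 * v := by
    have h1 : Real.log v = (1/12 : ℝ) * Real.log n := by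
      rw [hv]
      exact Real.log_rpow hnpos _
    have h2 : Real.log v ≤ v - 1 := Real.log_le_sub_one_of_pos hv0
    linarith
  -- u * v * v = s
  have huv : u * (v * v) = s := by
    rw [hs, Real.sqrt_eq_rpow, hu, hv, ← Real.rpow_add hnpos, ← Real.rpow_add hnpos]
    norm_num
  -- final assembly
  have hsum1 : ∑ p ∈ Pfin, ((((Finset.Icc 2 n).filter (fun i => p^i ≤ n)).card : ℝ) + 4)
        * Real.log p
      ≤ (∑ p ∈ Pfin, Real.log p) + (∑ p ∈ Pfin, (((Finset.Icc 3 n).filter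
          (fun i => p^i ≤ n)).card : ℝ) * Real.log p) + 4 * ∑ p ∈ Pfin, Real.log p := by
    have h1 : ∀ p ∈ Pfin, ((((Finset.Icc 2 n).filter (fun i => p^i ≤ n)).card : ℝ) + 4)
          * Real.log p
        ≤ Real.log p + (((Finset.Icc 3 n).filter (fun i => p^i ≤ n)).card : ℝ) * Real.log p
          + 4 * Real.log p := by
      intro p hp
      rcases hlogp p hp with ⟨hl0, _⟩
      have h2 : ((((Finset.Icc 2 n).filter (fun i => p^i ≤ n)).card : ℝ))
          ≤ 1 + (((Finset.Icc 3 n).filter (fun i => p^i ≤ n)).card : ℝ) := by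
        exact_mod_cast hK p
      calc ((((Finset.Icc 2 n).filter (fun i => p^i ≤ n)).card : ℝ) + 4) * Real.log p
          ≤ ((1 + (((Finset.Icc 3 n).filter (fun i => p^i ≤ n)).card : ℝ)) + 4)
            * Real.log p := mul_le_mul_of_nonneg_right (by linarith) hl0
        _ = Real.log p + (((Finset.Icc 3 n).filter (fun i => p^i ≤ n)).card : ℝ) * Real.log p
            + 4 * Real.log p := by ring
    calc ∑ p ∈ Pfin, ((((Finset.Icc 2 n).filter (fun i => p^i ≤ n)).card : ℝ) + 4) * Real.log p
        ≤ ∑ p ∈ Pfin, (Real.log p + (((Finset.Icc 3 n).filter (fun i => p^i ≤ n)).card : ℝ)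
            * Real.log p + 4 * Real.log p) := Finset.sum_le_sum h1
      _ = _ := by rw [Finset.sum_add_distrib, Finset.sum_add_distrib, ← Finset.mul_sum]
  have hsum2 : ∑ p ∈ Pfin, (((Finset.Icc 3 n).filter (fun i => p^i ≤ n)).card : ℝ) * Real.log p
      ≤ 576 * s := by
    calc ∑ p ∈ Pfin, (((Finset.Icc 3 n).filter (fun i => p^i ≤ n)).card : ℝ) * Real.log p
        ≤ ∑ p ∈ Pfin, (if p^3 ≤ n then (L2:ℝ) * Real.log n else 0) := Finset.sum_le_sum hK3
      _ = ∑ p ∈ Pfin3, (L2:ℝ) * Real.log n := by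
          rw [hPfin3]
          exact (Finset.sum_filter _ _).symm
      _ = (Pfin3.card : ℝ) * ((L2:ℝ) * Real.log n) := by
          rw [Finset.sum_const, nsmul_eq_mul]
      _ ≤ (2*u) * ((2 * (12*v)) * (12*v)) := by
          apply mul_le_mul hcard3
          · apply mul_le_mul
            · linarith
            · exact hlogv
            · exact hlogn0
            · positivity
          · positivity
          · positivity
      _ = 576 * (u * (v * v)) := by ring
      _ = 576 * s := by rw [huv]
  have hRs2 : 2*(R:ℝ) ≤ 2*s := by linarith
  calc (∑ p ∈ Pfin, ((((Finset.Icc 2 n).filter (fun i => p^i ≤ n)).card : ℝ) + 4)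
        * Real.log p) + tail * n
      ≤ ((∑ p ∈ Pfin, Real.log p) + 576 * s + 4 * ∑ p ∈ Pfin, Real.log p) + 24 * s := by
        have h4 : (4:ℝ) * ∑ p ∈ Pfin, Real.log p ≤ 4 * ∑ p ∈ Pfin, Real.log p := le_rfl
        linarith [hsum1, hsum2, htailb]
    _ ≤ (2*s + 576*s + 4*(2*s)) + 24*s := by
        have h5 : ∑ p ∈ Pfin, Real.log p ≤ 2*s := le_trans hsplog hRs2
        have h6 : 0 ≤ ∑ p ∈ Pfin, Real.log p :=
          Finset.sum_nonneg (fun p hp => (hlogp p hp).1)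
        nlinarith
    _ ≤ 1000 * s := by nlinarith
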